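/- arXiv:1212.4218 — 3 statements merged into one kernel-verified Lean document; each statement's English description precedes it below -/
import Mathlib

section
/- Let n ≥ 3 be an integer, m > 0, s₀ = (2m)^{1/(n−2)}, and let λ : I → ℝ be a differentiable function on an open interval I ⊆ ℝ with λ(r) > s₀ and λ'(r) = √(1 − 2m·λ(r)^{2−n}) for all r ∈ I. Then λ' is differentiable on I and (n−1)·((n−2)·(1 − λ'(r)²)/λ(r)² − 2·λ''(r)/λ(r)) = 0 for all r ∈ I. -/
/-- For a Schwarzschild warping function `λ` (with `λ > s₀ = (2m)^(1/(n−2))` and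
`λ' = √(1 − 2m·λ^(2−n))` on an open interval `I`), `λ'` is differentiable on `I` and
the scalar curvature identity `(n−1)·((n−2)·(1 − λ'²)/λ² − 2·λ''/λ) = 0` holds on `I`. -/
theorem stmt_4 (n : ℕ) (hn : 3 ≤ n) (m : ℝ) (hm : 0 < m)
    (s₀ : ℝ) (hs₀ : s₀ = (2 * m) ^ ((1 : ℝ) / ((n : ℝ) - 2)))
    (I : Set ℝ) (hIopen : IsOpen I) (hIconn : I.OrdConnected)
    (lam : ℝ → ℝ)
    (hlam : ∀ r ∈ I, s₀ < lam r)
    (hdiff : ∀ r ∈ I, DifferentiableAt ℝ lam r)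
    (hderiv : ∀ r ∈ I, deriv lam r = Real.sqrt (1 - 2 * m * lam r ^ (2 - (n : ℝ)))) :
    (∀ r ∈ I, DifferentiableAt ℝ (deriv lam) r) ∧
    (∀ r ∈ I,
      ((n : ℝ) - 1) * (((n : ℝ) - 2) * (1 - (deriv lam r) ^ 2) / (lam r) ^ 2 -
        2 * deriv (deriv lam) r / lam r) = 0) := by
  have hn2 : (0 : ℝ) < (n : ℝ) - 2 := by
    have : (3 : ℝ) ≤ (n : ℝ) := by exact_mod_cast hn
    linarith
  have h2m : (0:ℝ) < 2 * m := by linarith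
  have hs₀pos : 0 < s₀ := by
    rw [hs₀]; exact Real.rpow_pos_of_pos h2m _
  have key : ∀ r ∈ I, 0 < lam r ∧ 2 * m * lam r ^ (2 - (n:ℝ)) < 1 := by
    intro r hr
    have hL : 0 < lam r := lt_trans hs₀pos (hlam r hr)
    refine ⟨hL, ?_⟩
    have h1 : lam r ^ (2 - (n:ℝ)) < s₀ ^ (2 - (n:ℝ)) :=
      Real.rpow_lt_rpow_of_neg hs₀pos (hlam r hr) (by linarith)
    have h2 : s₀ ^ (2 - (n:ℝ)) = (2*m)⁻¹ := by
      rw [hs₀, ← Real.rpow_mul h2m.le]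
      have : (1 : ℝ) / ((n : ℝ) - 2) * (2 - (n:ℝ)) = -1 := by
        field_simp
        ring
      rw [this, Real.rpow_neg_one]
    have := mul_lt_mul_of_pos_left h1 h2m
    rwa [h2, mul_inv_cancel₀ h2m.ne'] at this
  -- the function g that equals deriv lam on I
  set g : ℝ → ℝ := fun x => Real.sqrt (1 - 2 * m * lam x ^ (2 - (n:ℝ))) with hg
  have heq : ∀ r ∈ I, deriv lam =ᶠ[nhds r] g := by
    intro r hr
    filter_upwards [hIopen.mem_nhds hr] with x hx using hderiv x hx
  -- hasDerivAt for g at each point of I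
  have hgderiv : ∀ r ∈ I, HasDerivAt g (m * ((n:ℝ) - 2) * lam r ^ (1 - (n:ℝ))) r := by
    intro r hr
    obtain ⟨hL, hlt⟩ := key r hr
    have hhpos : 0 < 1 - 2 * m * lam r ^ (2 - (n:ℝ)) := by linarith
    have hsq : 0 < Real.sqrt (1 - 2 * m * lam r ^ (2 - (n:ℝ))) := Real.sqrt_pos.2 hhpos
    have hlam' : HasDerivAt lam (deriv lam r) r := (hdiff r hr).hasDerivAt
    have hpow : HasDerivAt (fun x => lam x ^ (2 - (n:ℝ)))
        (deriv lam r * (2 - (n:ℝ)) * lam r ^ (2 - (n:ℝ) - 1)) r :=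
      hlam'.rpow_const (Or.inl hL.ne')
    have hh : HasDerivAt (fun x => 1 - 2 * m * lam x ^ (2 - (n:ℝ)))
        (-(2 * m * (deriv lam r * (2 - (n:ℝ)) * lam r ^ (2 - (n:ℝ) - 1)))) r := by
      simpa using ((hpow.const_mul (2*m)).const_sub 1)
    have hsqrt := (Real.hasDerivAt_sqrt hhpos.ne').comp r hh
    have hd : deriv lam r = Real.sqrt (1 - 2 * m * lam r ^ (2 - (n:ℝ))) := hderiv r hr
    refine hsqrt.congr_deriv (Eq.symm ?_)
    rw [← hd]
    have hdr : deriv lam r ≠ 0 := by rw [hd]; exact hsq.ne'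
    have hexp : lam r ^ (2 - (n:ℝ) - 1) = lam r ^ (1 - (n:ℝ)) := by ring_nf
    rw [hexp]
    field_simp
    ring
  constructor
  · intro r hr
    exact ((hgderiv r hr).differentiableAt).congr_of_eventuallyEq (heq r hr)
  · intro r hr
    obtain ⟨hL, hlt⟩ := key r hr
    have hd2 : deriv (deriv lam) r = m * ((n:ℝ) - 2) * lam r ^ (1 - (n:ℝ)) := by
      rw [(heq r hr).deriv_eq, (hgderiv r hr).deriv]
    have hsqv : (deriv lam r) ^ 2 = 1 - 2 * m * lam r ^ (2 - (n:ℝ)) := by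
      rw [hderiv r hr, Real.sq_sqrt (by linarith)]
    rw [hd2, hsqv]
    have hsplit : lam r ^ (2 - (n:ℝ)) = lam r ^ (1 - (n:ℝ)) * lam r := by
      rw [show (2 - (n:ℝ)) = (1 - (n:ℝ)) + 1 by ring, Real.rpow_add hL, Real.rpow_one]
    have : (1 : ℝ) - (1 - 2 * m * lam r ^ (2 - (n:ℝ))) = 2 * m * (lam r ^ (1 - (n:ℝ)) * lam r) := by
      rw [← hsplit]; ring
    rw [this]
    field_simp
    ring
end

section
/- Let n ≥ 3 be an integer, m > 0, s₀ = (2m)^{1/(n−2)}, and let λ : I → ℝ be a differentiable function on an open interval I ⊆ ℝ with λ(r) > s₀ and λ'(r) = √(1 − 2m·λ(r)^{2−n}) for all r ∈ I. Then λ' is differentiable on I and (n−2)·(1 − λ'(r)²)/λ(r)² − λ''(r)/λ(r) = m(n−2)·λ(r)^{−n} for all r ∈ I. -/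
/-- For a Schwarzschild warping function `λ` (with `λ > s₀ = (2m)^(1/(n−2))` and
`λ' = √(1 − 2m·λ^(2−n))` on an open interval `I`), `λ'` is differentiable on `I` and
the Ricci curvature identity `(n−2)·(1 − λ'²)/λ² − λ''/λ = m(n−2)·λ^(−n)` holds on `I`. -/
theorem stmt_6 (n : ℕ) (hn : 3 ≤ n) (m : ℝ) (hm : 0 < m)
    (s₀ : ℝ) (hs₀ : s₀ = (2 * m) ^ ((1 : ℝ) / ((n : ℝ) - 2)))
    (I : Set ℝ) (hIopen : IsOpen I) (hIconn : I.OrdConnected)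
    (lam : ℝ → ℝ)
    (hlam : ∀ r ∈ I, s₀ < lam r)
    (hdiff : ∀ r ∈ I, DifferentiableAt ℝ lam r)
    (hderiv : ∀ r ∈ I, deriv lam r = Real.sqrt (1 - 2 * m * lam r ^ (2 - (n : ℝ)))) :
    (∀ r ∈ I, DifferentiableAt ℝ (deriv lam) r) ∧
    (∀ r ∈ I,
      ((n : ℝ) - 2) * (1 - (deriv lam r) ^ 2) / (lam r) ^ 2 -
        deriv (deriv lam) r / lam r = m * ((n : ℝ) - 2) * lam r ^ (-(n : ℝ))) := by
  have hn2 : (0:ℝ) < (n:ℝ) - 2 := by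
    have : (3:ℝ) ≤ (n:ℝ) := by exact_mod_cast hn
    linarith
  have h2m : (0:ℝ) < 2 * m := by linarith
  have hs0pos : 0 < s₀ := hs₀ ▸ Real.rpow_pos_of_pos h2m _
  have key : ∀ r ∈ I, 0 < lam r ∧ 0 < 1 - 2 * m * lam r ^ (2 - (n:ℝ)) := by
    intro r hr
    have h1 : 0 < lam r := lt_trans hs0pos (hlam r hr)
    refine ⟨h1, ?_⟩
    have hpow : 2 * m < lam r ^ ((n:ℝ) - 2) := by
      have := Real.rpow_lt_rpow hs0pos.le (hlam r hr) hn2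
      rwa [hs₀, one_div, Real.rpow_inv_rpow h2m.le (ne_of_gt hn2)] at this
    have hx : (0:ℝ) < lam r ^ ((n:ℝ) - 2) := Real.rpow_pos_of_pos h1 _
    have hrw : lam r ^ (2 - (n:ℝ)) = (lam r ^ ((n:ℝ) - 2))⁻¹ := by
      rw [show (2 - (n:ℝ)) = -((n:ℝ) - 2) by ring, Real.rpow_neg h1.le]
    rw [hrw, ← div_eq_mul_inv]
    have : 2 * m / lam r ^ ((n:ℝ) - 2) < 1 := (div_lt_one hx).mpr hpow
    linarith
  have hD : ∀ r ∈ I, HasDerivAt (deriv lam)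
      (m * ((n:ℝ) - 2) * lam r ^ (1 - (n:ℝ))) r := by
    intro r hr
    obtain ⟨h1, hg⟩ := key r hr
    have hsq : 0 < Real.sqrt (1 - 2 * m * lam r ^ (2 - (n:ℝ))) := Real.sqrt_pos.mpr hg
    have hlam' : HasDerivAt lam (deriv lam r) r := (hdiff r hr).hasDerivAt
    have h2 : HasDerivAt (fun x => lam x ^ (2 - (n:ℝ)))
        (deriv lam r * (2 - (n:ℝ)) * lam r ^ (2 - (n:ℝ) - 1)) r :=
      hlam'.rpow_const (Or.inl h1.ne')
    have h3 : HasDerivAt (fun x => 1 - 2 * m * lam x ^ (2 - (n:ℝ)))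
        (-(2 * m * (deriv lam r * (2 - (n:ℝ)) * lam r ^ (2 - (n:ℝ) - 1)))) r :=
      (h2.const_mul (2 * m)).const_sub 1
    have h4 := h3.sqrt (ne_of_gt hg)
    have heq : deriv lam =ᶠ[nhds r]
        fun x => Real.sqrt (1 - 2 * m * lam x ^ (2 - (n:ℝ))) := by
      filter_upwards [hIopen.mem_nhds hr] with x hx using hderiv x hx
    have h5 := h4.congr_of_eventuallyEq heq
    have hd : deriv lam r ≠ 0 := by rw [hderiv r hr]; exact hsq.ne'
    have hE : -(2 * m * (deriv lam r * (2 - (n:ℝ)) * lam r ^ (2 - (n:ℝ) - 1))) /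
        (2 * Real.sqrt (1 - 2 * m * lam r ^ (2 - (n:ℝ)))) =
        m * ((n:ℝ) - 2) * lam r ^ (1 - (n:ℝ)) := by
      rw [show (2 - (n:ℝ) - 1) = 1 - (n:ℝ) by ring, ← hderiv r hr]
      field_simp
      ring
    exact hE ▸ h5
  refine ⟨fun r hr => (hD r hr).differentiableAt, fun r hr => ?_⟩
  obtain ⟨h1, hg⟩ := key r hr
  rw [(hD r hr).deriv, hderiv r hr, Real.sq_sqrt hg.le]
  have e1 : lam r ^ (2 - (n:ℝ)) = lam r ^ (-(n:ℝ)) * lam r ^ (2:ℕ) := by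
    rw [show (2 - (n:ℝ)) = -(n:ℝ) + 2 by ring, Real.rpow_add h1,
      show ((2:ℝ)) = ((2:ℕ):ℝ) by norm_num, Real.rpow_natCast]
  have e2 : lam r ^ (1 - (n:ℝ)) = lam r ^ (-(n:ℝ)) * lam r := by
    rw [show (1 - (n:ℝ)) = -(n:ℝ) + 1 by ring, Real.rpow_add h1, Real.rpow_one]
  rw [e1, e2]
  field_simp
  ring
end

section
/- Let n ≥ 3 be an integer and m > 0. On the open set of real numbers r > 0 with (m/2)·r^{2−n} < 1, the function s(r) = r·(1 + (m/2)·r^{2−n})^{2/(n−2)} is differentiable and satisfies s'(r)² = (1 + (m/2)·r^{2−n})^{4/(n−2)} · (1 − 2m·s(r)^{2−n}). -/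
/-- On `{r > 0 : (m/2)·r^(2−n) < 1}` the function `s(r) = r·(1 + (m/2)·r^(2−n))^(2/(n−2))`
is differentiable and satisfies
`s'(r)² = (1 + (m/2)·r^(2−n))^(4/(n−2)) · (1 − 2m·s(r)^(2−n))`. -/
theorem stmt_8 (n : ℕ) (hn : 3 ≤ n) (m : ℝ) (hm : 0 < m) :
    ∀ r : ℝ, 0 < r → (m / 2) * r ^ (2 - (n : ℝ)) < 1 →
      DifferentiableAt ℝ
        (fun x : ℝ => x * (1 + (m / 2) * x ^ (2 - (n : ℝ))) ^ ((2 : ℝ) / ((n : ℝ) - 2))) r ∧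
      (deriv
          (fun x : ℝ => x * (1 + (m / 2) * x ^ (2 - (n : ℝ))) ^ ((2 : ℝ) / ((n : ℝ) - 2))) r) ^ 2
        = (1 + (m / 2) * r ^ (2 - (n : ℝ))) ^ ((4 : ℝ) / ((n : ℝ) - 2)) *
            (1 - 2 * m *
              (r * (1 + (m / 2) * r ^ (2 - (n : ℝ))) ^ ((2 : ℝ) / ((n : ℝ) - 2)))
                ^ (2 - (n : ℝ))) := by
  intro r hr _hlt
  set p : ℝ := 2 - (n : ℝ) with hp
  set α : ℝ := (2 : ℝ) / ((n : ℝ) - 2) with hα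
  have hn3 : (3 : ℝ) ≤ (n : ℝ) := by exact_mod_cast hn
  have hn2' : (n : ℝ) - 2 ≠ 0 := by linarith
  have hu : 0 < 1 + (m / 2) * r ^ p := by positivity
  set u : ℝ := 1 + (m / 2) * r ^ p with hud
  have h1 : HasDerivAt (fun x : ℝ => 1 + (m / 2) * x ^ p)
      ((m / 2) * (p * r ^ (p - 1))) r := by
    have h := (Real.hasDerivAt_rpow_const (p := p) (Or.inl hr.ne')).const_mul (m / 2)
    simpa using h.const_add 1
  have h2 : HasDerivAt (fun y : ℝ => y ^ α) (α * u ^ (α - 1)) u :=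
    Real.hasDerivAt_rpow_const (Or.inl hu.ne')
  have h3 : HasDerivAt (fun x : ℝ => (1 + (m / 2) * x ^ p) ^ α)
      (α * u ^ (α - 1) * ((m / 2) * (p * r ^ (p - 1)))) r := by
    have := h2.comp r h1; exact this
  have h4 : HasDerivAt (fun x : ℝ => x * (1 + (m / 2) * x ^ p) ^ α)
      (1 * u ^ α + r * (α * u ^ (α - 1) * ((m / 2) * (p * r ^ (p - 1))))) r :=
    (hasDerivAt_id r).mul h3
  refine ⟨h4.differentiableAt, ?_⟩
  rw [h4.deriv]
  have hαp : α * p = -2 := by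
    rw [hα, hp]; field_simp; ring
  have hr1 : r * r ^ (p - 1) = r ^ p := by
    rw [Real.rpow_sub hr, Real.rpow_one]
    field_simp
  have hA : u ^ α = u ^ (α - 1) * u := by
    rw [← Real.rpow_add_one hu.ne' (α - 1), sub_add_cancel]
  have hB : u ^ ((4 : ℝ) / ((n : ℝ) - 2)) = (u ^ (α - 1)) ^ 2 * u ^ 2 := by
    have : (4 : ℝ) / ((n : ℝ) - 2) = (α - 1) * 2 + 2 := by
      rw [hα]; field_simp; ring
    rw [this, Real.rpow_add hu, ← Real.rpow_natCast (u ^ (α - 1)) 2,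
      ← Real.rpow_mul hu.le, ← Real.rpow_natCast u 2]
    norm_num
  have hC : (r * u ^ α) ^ p = r ^ p * (u ^ 2)⁻¹ := by
    rw [Real.mul_rpow hr.le (Real.rpow_nonneg hu.le _), ← Real.rpow_mul hu.le, hαp]
    rw [show (-2 : ℝ) = -(2 : ℕ) by norm_num, Real.rpow_neg hu.le, Real.rpow_natCast]
  rw [hB, hC, hA]
  have hkey : r * (α * u ^ (α - 1) * (m / 2 * (p * r ^ (p - 1))))
      = u ^ (α - 1) * (α * p) * (m / 2 * r ^ p) := by
    rw [← hr1]; ring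
  rw [hkey, hαp]
  have hu2 : (u : ℝ) ^ 2 ≠ 0 := pow_ne_zero _ hu.ne'
  field_simp
  rw [hud]
  ring
end
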